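/- Let A be a separable C*-algebra and let D ⊆ A be an abelian closed *-subalgebra containing an approximate unit for A and such that for every character φ of D the quotient D'/J_φ is unital. Then the following are equivalent: (a) for each character φ of D there exist d ∈ D and an open neighbourhood U of φ in the character space D̂ such that d + J_ψ is the unit of D'/J_ψ for all ψ ∈ U; (b) for each character φ of D and each d ∈ D, one has d + J_φ = φ(d)·1_{D'/J_φ}. -/

import Mathlib

open WeakDual Filter Topology Classical

variable {A : Type} [NonUnitalNormedRing A] [StarRing A] [CStarRing A]
  [NormedSpace ℂ A] [IsScalarTower ℂ A A] [SMulCommClass ℂ A A] [CompleteSpace A] [StarModule ℂ A]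

/-- Evaluation of a character of `D` at an element of `A` (taken to be `0` off `D`). -/
noncomputable def evalD (D : NonUnitalStarSubalgebra ℂ A) (φ : characterSpace ℂ D) (a : A) : ℂ :=
  if h : a ∈ D then φ (⟨a, h⟩ : D) else 0

/-- The open support `supp°(a) = {φ ∈ D̂ : φ(a) ≠ 0}`. -/
def suppo (D : NonUnitalStarSubalgebra ℂ A) (a : A) : Set (characterSpace ℂ D) :=
  {φ | evalD D φ a ≠ 0}

/-- `n` is a normaliser of `D` in `A`. -/
def IsNormalizer (D : NonUnitalStarSubalgebra ℂ A) (n : A) : Prop :=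
  ∀ d ∈ D, n * d * star n ∈ D ∧ star n * d * n ∈ D

/-- `S` contains an approximate unit for `A`: there is a net in `S` converging
multiplicatively to the identity on every element of `A`. -/
def HasApproxUnit (S : Set A) : Prop :=
  ∃ (ι : Type) (l : Filter ι) (e : ι → A), l.NeBot ∧ (∀ i, e i ∈ S) ∧
    ∀ a : A, Tendsto (fun i => e i * a) l (nhds a) ∧ Tendsto (fun i => a * e i) l (nhds a)

/-- `α` is "the" homeomorphism `α_n : supp°(n*n) → supp°(nn*)` attached to a normaliser `n`,
i.e. a partial homeomorphism of `D̂` with source `supp°(n*n)`, target `supp°(nn*)`, and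
satisfying `φ(n*n)·(α_n φ)(d) = φ(n* d n)` for all `φ` in the source and `d ∈ D`. -/
def IsWeylHomeo (D : NonUnitalStarSubalgebra ℂ A) (n : A)
    (α : PartialHomeomorph (characterSpace ℂ D) (characterSpace ℂ D)) : Prop :=
  α.source = suppo D (star n * n) ∧ α.target = suppo D (n * star n) ∧
  ∀ φ ∈ α.source, ∀ d ∈ D, evalD D φ (star n * n) * evalD D (α φ) d = evalD D φ (star n * d * n)

/-- The relative commutant `D' = {a ∈ A : a d = d a for all d ∈ D}`, as a set. -/
def commutantSet (D : NonUnitalStarSubalgebra ℂ A) : Set A := {a | ∀ d ∈ D, a * d = d * a}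

/-- The ideal `J_φ ⊆ D'`: the closure of `(ker φ)·D'`. -/
noncomputable def Jset (D : NonUnitalStarSubalgebra ℂ A) (φ : characterSpace ℂ D) : Set A :=
  closure ((Submodule.span ℂ {x : A | ∃ k ∈ (D : Set A), ∃ a ∈ commutantSet D,
    evalD D φ k = 0 ∧ x = k * a} : Submodule ℂ A) : Set A)

/-- `e ∈ D'` represents the unit of `D'/J_φ`. -/
def IsUnitModJ (D : NonUnitalStarSubalgebra ℂ A) (φ : characterSpace ℂ D) (e : A) : Prop :=
  e ∈ commutantSet D ∧ ∀ a ∈ commutantSet D, e * a - a ∈ Jset D φ ∧ a * e - a ∈ Jset D φ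

/-- `D` is a weakly Cartan subalgebra of `A`. -/
def IsWeaklyCartan (D : NonUnitalStarSubalgebra ℂ A) : Prop :=
  IsClosed (D : Set A) ∧ (∀ x ∈ D, ∀ y ∈ D, x * y = y * x) ∧ HasApproxUnit (D : Set A) ∧
  (∀ φ : characterSpace ℂ D, ∃ e, IsUnitModJ D φ e) ∧
  (∀ φ : characterSpace ℂ D, ∃ d ∈ D, ∃ U : Set (characterSpace ℂ D),
    IsOpen U ∧ φ ∈ U ∧ ∀ ψ ∈ U, IsUnitModJ D ψ d)

/-- The relative commutant `D'` as a non-unital star subalgebra of `A`. -/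
def commutantAlg (D : NonUnitalStarSubalgebra ℂ A) : NonUnitalStarSubalgebra ℂ A where
  carrier := commutantSet D
  add_mem' := by
    intro a b ha hb d hd
    simp only [commutantSet, Set.mem_setOf_eq] at *
    rw [add_mul, mul_add, ha d hd, hb d hd]
  zero_mem' := by
    intro d _
    rw [zero_mul, mul_zero]
  mul_mem' := by
    intro a b ha hb d hd
    calc a * b * d = a * (b * d) := by rw [mul_assoc]
      _ = a * (d * b) := by rw [hb d hd]
      _ = a * d * b := by rw [mul_assoc]
      _ = d * a * b := by rw [ha d hd]
      _ = d * (a * b) := by rw [mul_assoc]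
  smul_mem' := by
    intro c a ha d hd
    rw [smul_mul_assoc, ha d hd, mul_smul_comm]
  star_mem' := by
    intro a ha d hd
    calc star a * d = star (star d * a) := by rw [star_mul, star_star]
      _ = star (a * star d) := by rw [← ha (star d) (star_mem hd)]
      _ = d * star a := by rw [star_mul, star_star]

/-- `w` is a representative in `A` of the unitary `U^φ_{n*m}` of `D'/J_φ`:
`w = φ(m*m)^{-1/2}·φ(n*n)^{-1/2}·(d n* m d)` for some admissible `U` and `d`. -/
noncomputable def WeylRep (D : NonUnitalStarSubalgebra ℂ A) (n m : A)
    (φ : characterSpace ℂ D) (w : A) : Prop :=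
  ∃ U : Set (characterSpace ℂ D), IsOpen U ∧ φ ∈ U ∧
    U ⊆ suppo D (star n * n) ∩ suppo D (star m * m) ∧
    (∃ αn αm : PartialHomeomorph (characterSpace ℂ D) (characterSpace ℂ D),
       IsWeylHomeo D n αn ∧ IsWeylHomeo D m αm ∧ Set.EqOn ⇑αn ⇑αm U) ∧
    ∃ d ∈ (D : Set A), suppo D d ⊆ U ∧ evalD D φ d = 1 ∧
      w = (evalD D φ (star m * m) ^ (-(1/2) : ℂ) * evalD D φ (star n * n) ^ (-(1/2) : ℂ)) •
        (d * (star n * m) * d)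

/-- The unitary `U^φ_{n*m}` of `D'/J_φ` lies in the connected component of the identity of
the unitary group of `D'/J_φ`; the quotient `D'/J_φ` is represented by an arbitrary
surjective star-homomorphism `π` from `D'` onto a unital C*-algebra `Q` with kernel `J_φ`. -/
noncomputable def InU0 (D : NonUnitalStarSubalgebra ℂ A) (n m : A)
    (φ : characterSpace ℂ D) : Prop :=
  ∀ (Q : Type) [NormedRing Q] [StarRing Q] [CStarRing Q] [NormedAlgebra ℂ Q]
    [CompleteSpace Q] [StarModule ℂ Q] (π : commutantAlg D →⋆ₙₐ[ℂ] Q),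
    Function.Surjective ⇑π →
    (∀ a : commutantAlg D, π a = 0 ↔ (a : A) ∈ Jset D φ) →
    ∃ w : commutantAlg D, WeylRep D n m φ (w : A) ∧
      ∃ hu : π w ∈ unitary Q, (⟨π w, hu⟩ : unitary Q) ∈ connectedComponent (1 : unitary Q)

/-- The relation `(n, φ) ∼ (m, ψ)` of Lemma 4.7 (for the trivial coaction). -/
noncomputable def WeylSimRaw (D : NonUnitalStarSubalgebra ℂ A) (n : A)
    (φ : characterSpace ℂ D) (m : A) (ψ : characterSpace ℂ D) : Prop :=
  φ = ψ ∧
  (∃ U : Set (characterSpace ℂ D), IsOpen U ∧ φ ∈ U ∧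
    U ⊆ suppo D (star n * n) ∩ suppo D (star m * m) ∧
    ∃ αn αm : PartialHomeomorph (characterSpace ℂ D) (characterSpace ℂ D),
      IsWeylHomeo D n αn ∧ IsWeylHomeo D m αm ∧ Set.EqOn ⇑αn ⇑αm U) ∧
  InU0 D n m φ

/-- The set of pairs `(n, φ)` with `n ∈ N(D)` and `φ ∈ supp°(n*n)`. -/
def WeylPair (D : NonUnitalStarSubalgebra ℂ A) : Type :=
  {p : A × characterSpace ℂ D // IsNormalizer D p.1 ∧ p.2 ∈ suppo D (star p.1 * p.1)}

set_option linter.unusedSectionVars false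

section Aux

variable (D : NonUnitalStarSubalgebra ℂ A)

lemma mem_comm_of_mem (hDab : ∀ x ∈ D, ∀ y ∈ D, x * y = y * x) {a : A} (ha : a ∈ D) :
    a ∈ commutantSet D := fun k hk => hDab a ha k hk

lemma comm_sub {a b : A} (ha : a ∈ commutantSet D) (hb : b ∈ commutantSet D) :
    a - b ∈ commutantSet D := fun k hk => by
  rw [sub_mul, mul_sub, ha k hk, hb k hk]

lemma comm_smul (c : ℂ) {a : A} (ha : a ∈ commutantSet D) :
    c • a ∈ commutantSet D := fun k hk => by
  rw [smul_mul_assoc, ha k hk, mul_smul_comm]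

lemma comm_mul {a b : A} (ha : a ∈ commutantSet D) (hb : b ∈ commutantSet D) :
    a * b ∈ commutantSet D := fun k hk => by
  rw [mul_assoc, hb k hk, ← mul_assoc, ha k hk, mul_assoc]

lemma evalD_of_mem (φ : characterSpace ℂ D) {a : A} (ha : a ∈ D) :
    evalD D φ a = φ (⟨a, ha⟩ : D) := dif_pos ha

lemma evalD_mul (φ : characterSpace ℂ D) {a b : A} (ha : a ∈ D) (hb : b ∈ D) :
    evalD D φ (a * b) = evalD D φ a * evalD D φ b := by
  rw [evalD_of_mem D φ (mul_mem ha hb), evalD_of_mem D φ ha, evalD_of_mem D φ hb, ← map_mul]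
  rfl

lemma evalD_smul (φ : characterSpace ℂ D) (c : ℂ) {a : A} (ha : a ∈ D) :
    evalD D φ (c • a) = c * evalD D φ a := by
  rw [evalD_of_mem D φ (SMulMemClass.smul_mem c ha), evalD_of_mem D φ ha, ← smul_eq_mul,
    ← map_smul]
  rfl

lemma evalD_sub (φ : characterSpace ℂ D) {a b : A} (ha : a ∈ D) (hb : b ∈ D) :
    evalD D φ (a - b) = evalD D φ a - evalD D φ b := by
  rw [evalD_of_mem D φ (sub_mem ha hb), evalD_of_mem D φ ha, evalD_of_mem D φ hb, ← map_sub]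
  rfl

/-- The spanning set of `Jset`. -/
def Jgen (φ : characterSpace ℂ D) : Set A :=
  {x : A | ∃ k ∈ (D : Set A), ∃ a ∈ commutantSet D, evalD D φ k = 0 ∧ x = k * a}

lemma Jset_eq (φ : characterSpace ℂ D) :
    Jset D φ = ((Submodule.span ℂ (Jgen D φ)).topologicalClosure : Set A) :=
  (Submodule.topologicalClosure_coe _).symm

lemma J_closed (φ : characterSpace ℂ D) : IsClosed (Jset D φ) := isClosed_closure

lemma J_add (φ : characterSpace ℂ D) {x y : A} (hx : x ∈ Jset D φ) (hy : y ∈ Jset D φ) :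
    x + y ∈ Jset D φ := by
  rw [Jset_eq] at *
  exact add_mem hx hy

lemma J_smul (φ : characterSpace ℂ D) (c : ℂ) {x : A} (hx : x ∈ Jset D φ) :
    c • x ∈ Jset D φ := by
  rw [Jset_eq] at *
  exact Submodule.smul_mem _ c hx

lemma J_sub (φ : characterSpace ℂ D) {x y : A} (hx : x ∈ Jset D φ) (hy : y ∈ Jset D φ) :
    x - y ∈ Jset D φ := by
  rw [Jset_eq] at *
  exact sub_mem hx hy

lemma J_gen_mem (φ : characterSpace ℂ D) {k a : A} (hk : k ∈ D) (hφk : evalD D φ k = 0)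
    (ha : a ∈ commutantSet D) : k * a ∈ Jset D φ :=
  subset_closure (Submodule.subset_span ⟨k, hk, a, ha, hφk, rfl⟩)

lemma J_mul_right (φ : characterSpace ℂ D) {x a : A} (hx : x ∈ Jset D φ)
    (ha : a ∈ commutantSet D) : x * a ∈ Jset D φ := by
  have hmaps : Set.MapsTo (· * a) ((Submodule.span ℂ (Jgen D φ) : Submodule ℂ A) : Set A)
      ((Submodule.span ℂ (Jgen D φ) : Submodule ℂ A) : Set A) := by
    intro z hz
    simp only [SetLike.mem_coe] at *
    induction hz using Submodule.span_induction with
    | mem w hwm =>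
      obtain ⟨k, hk, b, hb, hφk, rfl⟩ := hwm
      rw [mul_assoc]
      exact Submodule.subset_span ⟨k, hk, b * a, comm_mul D hb ha, hφk, rfl⟩
    | zero => rw [zero_mul]; exact zero_mem _
    | add w v _ _ hw hv => rw [add_mul]; exact add_mem hw hv
    | smul c w _ hw => rw [smul_mul_assoc]; exact Submodule.smul_mem _ c hw
  exact map_mem_closure (f := (· * a)) (continuous_mul_right a) hx hmaps

lemma J_mul_left (φ : characterSpace ℂ D) {x a : A} (hx : x ∈ Jset D φ)
    (ha : a ∈ commutantSet D) : a * x ∈ Jset D φ := by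
  have hmaps : Set.MapsTo (a * ·) ((Submodule.span ℂ (Jgen D φ) : Submodule ℂ A) : Set A)
      ((Submodule.span ℂ (Jgen D φ) : Submodule ℂ A) : Set A) := by
    intro z hz
    simp only [SetLike.mem_coe] at *
    induction hz using Submodule.span_induction with
    | mem w hwm =>
      obtain ⟨k, hk, b, hb, hφk, rfl⟩ := hwm
      have hco : a * (k * b) = k * (a * b) := by
        rw [← mul_assoc, ha k hk, mul_assoc]
      rw [hco]
      exact Submodule.subset_span ⟨k, hk, a * b, comm_mul D ha hb, hφk, rfl⟩
    | zero => rw [mul_zero]; exact zero_mem _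
    | add w v _ _ hw hv => rw [mul_add]; exact add_mem hw hv
    | smul c w _ hw => rw [mul_smul_comm]; exact Submodule.smul_mem _ c hw
  exact map_mem_closure (f := (a * ·)) (continuous_mul_left a) hx hmaps

lemma ker_sub_J (hDab : ∀ x ∈ D, ∀ y ∈ D, x * y = y * x)
    (hDapprox : HasApproxUnit (D : Set A)) (φ : characterSpace ℂ D) {k : A}
    (hk : k ∈ D) (h0 : evalD D φ k = 0) : k ∈ Jset D φ := by
  obtain ⟨ι, l, e, hl, heD, htend⟩ := hDapprox
  haveI := hl
  exact (J_closed D φ).mem_of_tendsto (htend k).2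
    (Eventually.of_forall fun i => J_gen_mem D φ hk h0 (mem_comm_of_mem D hDab (heD i)))

set_option maxHeartbeats 1000000 in
lemma exists_local_one (hDclosed : IsClosed (D : Set A)) (φ : characterSpace ℂ D) :
    ∃ d ∈ D, ∃ U : Set (characterSpace ℂ D), IsOpen U ∧ φ ∈ U ∧
      ∀ ψ ∈ U, evalD D ψ d = 1 := by
  letI : NonUnitalCStarAlgebra A := { }
  haveI : IsClosed (D : Set A) := hDclosed
  have hstar : ∀ ψ : characterSpace ℂ D, ∀ a : D, ψ (star a) = (starRingEnd ℂ) (ψ a) := by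
    intro ψ a
    let ψ' : Unitization ℂ D →ₐ[ℂ] ℂ := Unitization.lift (CharacterSpace.toNonUnitalAlgHom ψ)
    have h := StarHomClass.map_star (self := AlgHomClass.instStarHomClass) ψ'
        (Unitization.inr a : Unitization ℂ D)
    rw [← Unitization.inr_star] at h
    simpa [ψ'] using h
  have hφne : ∃ x : D, φ x ≠ 0 := by
    by_contra hcon
    push_neg at hcon
    exact φ.prop.1 (DFunLike.ext _ _ fun x => by exact hcon x)
  obtain ⟨x, hx⟩ := hφne
  set y : D := star x * x with hy_def
  have hy : IsSelfAdjoint y := IsSelfAdjoint.star_mul_self x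
  set r : ℝ := Complex.normSq (φ x) with hr_def
  have hr : 0 < r := Complex.normSq_pos.mpr hx
  have hφy : φ y = (r : ℂ) := by
    rw [hy_def, map_mul, hstar φ x, mul_comm, Complex.mul_conj]
  set f : ℝ → ℝ := fun t => min 1 (max 0 (4 * t / r - 1)) with hf_def
  have hf : Continuous f := by fun_prop
  have hf0 : f 0 = 0 := by
    simp only [hf_def, mul_zero, zero_div, zero_sub]
    norm_num
  have hf1 : ∀ t : ℝ, r / 2 ≤ t → f t = 1 := by
    intro t htr
    have h4 : (1 : ℝ) ≤ 4 * t / r - 1 := by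
      rw [le_sub_iff_add_le, le_div_iff₀ hr]; linarith
    simp only [hf_def]
    rw [max_eq_right (by linarith), min_eq_left h4]
  have key : ∀ ψ : characterSpace ℂ D, ψ (cfcₙ f y) = (f ((ψ y).re) : ℂ) := by
    intro ψ
    let ψ' : D →⋆ₙₐ[ℂ] ℂ :=
      { CharacterSpace.toNonUnitalAlgHom ψ with map_star' := fun a => hstar ψ a }
    have hψc : Continuous ψ' := map_continuous ψ
    have hsa : IsSelfAdjoint (ψ y) := by
      rw [IsSelfAdjoint, RCLike.star_def, ← hstar ψ y, hy.star_eq]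
    have hkey : ψ' (cfcₙ f y) = cfcₙ f (ψ' y) :=
      NonUnitalStarAlgHom.map_cfcₙ ψ' f y (hf.continuousOn) hf0 hψc hy hsa
    have hrw : ψ' y = algebraMap ℝ ℂ ((ψ y).re) := by
      have h2 := Complex.conj_eq_iff_re.mp hsa
      exact_mod_cast h2.symm
    rw [show ψ (cfcₙ f y) = ψ' (cfcₙ f y) from rfl, hkey, hrw, cfcₙ_eq_cfc, cfc_algebraMap]
    simp
  refine ⟨((cfcₙ f y : D) : A), (cfcₙ f y : D).2,
    {ψ : characterSpace ℂ D | r / 2 < (ψ y).re}, ?_, ?_, ?_⟩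
  · have hc : Continuous fun ψ : characterSpace ℂ D => ψ y :=
      (WeakDual.eval_continuous y).comp continuous_subtype_val
    exact isOpen_lt continuous_const (Complex.continuous_re.comp hc)
  · simp only [Set.mem_setOf_eq, hφy]
    simpa using by linarith
  · intro ψ hψ
    have hmem : evalD D ψ ((cfcₙ f y : D) : A) = ψ (cfcₙ f y) := by
      rw [evalD_of_mem D ψ (cfcₙ f y : D).2]
    rw [hmem, key ψ, hf1 _ (le_of_lt hψ)]
    norm_num

end Aux

theorem statement_0 [TopologicalSpace.SeparableSpace A]
    (D : NonUnitalStarSubalgebra ℂ A) (hDclosed : IsClosed (D : Set A))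
    (hDabelian : ∀ x ∈ D, ∀ y ∈ D, x * y = y * x)
    (hDapprox : HasApproxUnit (D : Set A))
    (hDunital : ∀ φ : characterSpace ℂ D, ∃ e, IsUnitModJ D φ e) :
    (∀ φ : characterSpace ℂ D, ∃ d ∈ D, ∃ U : Set (characterSpace ℂ D),
        IsOpen U ∧ φ ∈ U ∧ ∀ ψ ∈ U, IsUnitModJ D ψ d) ↔
    (∀ φ : characterSpace ℂ D, ∀ d ∈ D, ∀ e : A, IsUnitModJ D φ e →
        d - evalD D φ d • e ∈ Jset D φ) := by
  have hDsub : ∀ a ∈ D, a ∈ commutantSet D := fun a ha => mem_comm_of_mem D hDabelian ha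
  constructor
  · -- (a) → (b)
    intro h φ d hd e he
    obtain ⟨d₀, hd₀, U, hU, hφU, hUu⟩ := h φ
    have hu₀ : IsUnitModJ D φ d₀ := hUu φ hφU
    by_cases hdeg : ∀ a ∈ commutantSet D, a ∈ Jset D φ
    · exact hdeg _ (comm_sub D (hDsub d hd) (comm_smul D _ he.1))
    · push_neg at hdeg
      obtain ⟨a₀, ha₀c, ha₀J⟩ := hdeg
      -- an element g of D with φ(g) = 1
      have hφne : ∃ x : D, φ x ≠ 0 := by
        by_contra hcon
        push_neg at hcon
        exact φ.prop.1 (DFunLike.ext _ _ fun x => by exact hcon x)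
      obtain ⟨x, hx⟩ := hφne
      set g : A := (φ x)⁻¹ • (x : A) with hg_def
      have hgD : g ∈ D := SMulMemClass.smul_mem _ x.2
      have hφg : evalD D φ g = 1 := by
        rw [hg_def, evalD_smul D φ _ x.2, evalD_of_mem D φ x.2]
        simp only [Subtype.coe_eta]
        exact inv_mul_cancel₀ hx
      set t : ℂ := evalD D φ d₀ with ht_def
      have e1 : g * d₀ - t • g ∈ Jset D φ := by
        refine ker_sub_J D hDabelian hDapprox φ (sub_mem (mul_mem hgD hd₀)
          (SMulMemClass.smul_mem _ hgD)) ?_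
        rw [evalD_sub D φ (mul_mem hgD hd₀) (SMulMemClass.smul_mem _ hgD),
          evalD_mul D φ hgD hd₀, evalD_smul D φ _ hgD, hφg, one_mul, mul_one, sub_self]
      have e2 : g * d₀ - g ∈ Jset D φ := (hu₀.2 g (hDsub g hgD)).2
      have e3 : (1 - t) • g ∈ Jset D φ := by
        have hcalc : (1 - t) • g = (g * d₀ - t • g) - (g * d₀ - g) := by
          rw [sub_smul, one_smul]; abel
        rw [hcalc]
        exact J_sub D φ e1 e2
      by_cases ht : t = 1
      · have hd₀e : d₀ - e ∈ Jset D φ := by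
          have u1 : d₀ * e - e ∈ Jset D φ := (hu₀.2 e he.1).1
          have u2 : d₀ * e - d₀ ∈ Jset D φ := (he.2 d₀ (hDsub d₀ hd₀)).2
          have hcalc : d₀ - e = (d₀ * e - e) - (d₀ * e - d₀) := by abel
          rw [hcalc]
          exact J_sub D φ u1 u2
        have hkd : d - evalD D φ d • d₀ ∈ Jset D φ := by
          refine ker_sub_J D hDabelian hDapprox φ
            (sub_mem hd (SMulMemClass.smul_mem _ hd₀)) ?_
          rw [evalD_sub D φ hd (SMulMemClass.smul_mem _ hd₀), evalD_smul D φ _ hd₀,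
            ← ht_def, ht, mul_one, sub_self]
        have hcalc : d - evalD D φ d • e =
            (d - evalD D φ d • d₀) + evalD D φ d • (d₀ - e) := by
          rw [smul_sub]; abel
        rw [hcalc]
        exact J_add D φ hkd (J_smul D φ _ hd₀e)
      · exfalso
        apply ha₀J
        have hgJ : g ∈ Jset D φ := by
          have h1t : (1 : ℂ) - t ≠ 0 := sub_ne_zero.mpr (Ne.symm ht)
          have := J_smul D φ (1 - t)⁻¹ e3
          rwa [smul_smul, inv_mul_cancel₀ h1t, one_smul] at this
        have hDJ : ∀ k ∈ D, k ∈ Jset D φ := by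
          intro k hk
          have h1 : k - evalD D φ k • g ∈ Jset D φ := by
            refine ker_sub_J D hDabelian hDapprox φ
              (sub_mem hk (SMulMemClass.smul_mem _ hgD)) ?_
            rw [evalD_sub D φ hk (SMulMemClass.smul_mem _ hgD), evalD_smul D φ _ hgD,
              hφg, mul_one, sub_self]
          have hcalc : k = (k - evalD D φ k • g) + evalD D φ k • g := by abel
          rw [hcalc]
          exact J_add D φ h1 (J_smul D φ _ hgJ)
        obtain ⟨ι, l, eapp, hl, heD, htend⟩ := hDapprox
        haveI := hl
        exact (J_closed D φ).mem_of_tendsto (htend a₀).1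
          (Eventually.of_forall fun i => J_mul_right D φ (hDJ _ (heD i)) ha₀c)
  · -- (b) → (a)
    intro h φ
    obtain ⟨d, hdD, U, hU, hφU, hone⟩ := exists_local_one D hDclosed φ
    refine ⟨d, hdD, U, hU, hφU, fun ψ hψ => ?_⟩
    obtain ⟨eψ, heψ⟩ := hDunital ψ
    have hb : d - eψ ∈ Jset D ψ := by
      have := h ψ d hdD eψ heψ
      rwa [hone ψ hψ, one_smul] at this
    refine ⟨hDsub d hdD, fun a ha => ⟨?_, ?_⟩⟩
    · have h1 : (d - eψ) * a ∈ Jset D ψ := J_mul_right D ψ hb ha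
      have h2 : eψ * a - a ∈ Jset D ψ := (heψ.2 a ha).1
      have hcalc : d * a - a = (d - eψ) * a + (eψ * a - a) := by
        rw [sub_mul]; abel
      rw [hcalc]
      exact J_add D ψ h1 h2
    · have h1 : a * (d - eψ) ∈ Jset D ψ := J_mul_left D ψ hb ha
      have h2 : a * eψ - a ∈ Jset D ψ := (heψ.2 a ha).2
      have hcalc : a * d - a = a * (d - eψ) + (a * eψ - a) := by
        rw [mul_sub]; abel
      rw [hcalc]
      exact J_add D ψ h1 h2
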